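/- Let H ∈ (1/2, 1), set α_H = H(2H−1) and φ(y) = α_H |y|^{2H−2} for y ≠ 0. Then there exists a constant C > 0, depending only on H, such that for every δ ∈ [0, H], every λ > 0 and all real numbers 0 ≤ s < t, one has λ^{2δ} ∫_s^t ∫_s^t e^{−λ(2t−u−v)} φ(u−v) du dv ≤ C (t−s)^{2(H−δ)}. -/

import Mathlib

open MeasureTheory Set Real

namespace Stmt2Aux

lemma II_left {p : ℝ} (hp : -1 < p) (x y : ℝ) :
    IntervalIntegrable (fun v => (y - v) ^ p) volume x y := by
  have h := (intervalIntegral.intervalIntegrable_rpow' hp (a := 0) (b := y - x)).comp_sub_left y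
  simpa [sub_sub_cancel] using h.symm

lemma II_right {p : ℝ} (hp : -1 < p) (x y : ℝ) :
    IntervalIntegrable (fun v => (v - x) ^ p) volume x y := by
  have h := (intervalIntegral.intervalIntegrable_rpow' hp (a := 0) (b := y - x)).comp_sub_right x
  simpa using h

lemma val_left {p : ℝ} (hp : -1 < p) (x y : ℝ) :
    ∫ v in x..y, (y - v) ^ p = (y - x) ^ (p + 1) / (p + 1) := by
  rw [intervalIntegral.integral_comp_sub_left (fun w => w ^ p) y, sub_self,
    integral_rpow (Or.inl hp), Real.zero_rpow (ne_of_gt (by linarith : (0:ℝ) < p + 1)),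
    sub_zero]

lemma val_right {p : ℝ} (hp : -1 < p) (x y : ℝ) :
    ∫ v in x..y, (v - x) ^ p = (y - x) ^ (p + 1) / (p + 1) := by
  rw [intervalIntegral.integral_comp_sub_right (fun w => w ^ p) x, sub_self,
    integral_rpow (Or.inl hp), Real.zero_rpow (ne_of_gt (by linarith : (0:ℝ) < p + 1)),
    sub_zero]

lemma abs_II_left {p : ℝ} (hp : -1 < p) {x y : ℝ} (hxy : x ≤ y) :
    IntervalIntegrable (fun v => |y - v| ^ p) volume x y := by
  refine (II_left hp x y).congr ?_
  intro v hv
  beta_reduce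
  rw [uIoc_of_le hxy] at hv
  rw [abs_of_nonneg (by linarith [hv.2] : (0:ℝ) ≤ y - v)]

lemma abs_II_right {p : ℝ} (hp : -1 < p) {x y : ℝ} (hxy : x ≤ y) :
    IntervalIntegrable (fun v => |x - v| ^ p) volume x y := by
  refine (II_right hp x y).congr ?_
  intro v hv
  beta_reduce
  rw [uIoc_of_le hxy] at hv
  rw [abs_sub_comm, abs_of_nonneg (by linarith [hv.1] : (0:ℝ) ≤ v - x)]

lemma gammaKernel_integrableOn {p r : ℝ} (hp : -1 < p) (hr : 0 < r) :
    IntegrableOn (fun x : ℝ => x ^ p * Real.exp (-(r * x))) (Ioi 0) := by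
  have h0 : IntegrableOn (fun x : ℝ => Real.exp (-x) * x ^ p) (Ioi 0) := by
    have := Real.GammaIntegral_convergent (s := p + 1) (by linarith)
    simpa using this
  have h1 : IntegrableOn (fun x : ℝ => Real.exp (-(r * x)) * (r * x) ^ p) (Ioi 0) := by
    have := (integrableOn_Ioi_comp_mul_left_iff
      (fun x : ℝ => Real.exp (-x) * x ^ p) 0 hr).mpr
    simpa [mul_zero] using this (by simpa [mul_zero] using h0)
  refine MeasureTheory.IntegrableOn.congr_fun (h1.const_mul (r ^ (-p)))
    (fun x hx => ?_) measurableSet_Ioi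
  have hx0 : (0:ℝ) < x := hx
  have key : (r * x) ^ p = r ^ p * x ^ p := Real.mul_rpow hr.le hx0.le
  have e1 : r ^ (-p) * r ^ p = 1 := by
    rw [← Real.rpow_add hr]; simp
  calc r ^ (-p) * (Real.exp (-(r * x)) * (r * x) ^ p)
      = (r ^ (-p) * r ^ p) * (x ^ p * Real.exp (-(r * x))) := by rw [key]; ring
    _ = x ^ p * Real.exp (-(r * x)) := by rw [e1, one_mul]

lemma int_le_gamma {p r : ℝ} (hp : -1 < p) (hr : 0 < r) {c : ℝ} (hc : 0 ≤ c) :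
    ∫ x in (0:ℝ)..c, x ^ p * Real.exp (-(r * x)) ≤ (1 / r) ^ (p + 1) * Real.Gamma (p + 1) := by
  have hval := Real.integral_rpow_mul_exp_neg_mul_Ioi (a := p + 1) (by linarith) hr
  simp only [add_sub_cancel_right] at hval
  rw [intervalIntegral.integral_of_le hc, integral_Ioc_eq_integral_Ioo, ← hval]
  refine setIntegral_mono_set (gammaKernel_integrableOn hp hr) ?_ ?_
  · refine (ae_restrict_iff' measurableSet_Ioi).mpr (ae_of_all _ fun x hx => ?_)
    exact mul_nonneg (Real.rpow_nonneg (le_of_lt hx) _) (Real.exp_pos _).le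
  · exact HasSubset.Subset.eventuallyLE (fun x hx => hx.1)

end Stmt2Aux

open Stmt2Aux in
theorem stmt_2 (H : ℝ) (hH : H ∈ Set.Ioo (1/2 : ℝ) 1) :
    ∃ C : ℝ, 0 < C ∧ ∀ δ : ℝ, δ ∈ Set.Icc 0 H → ∀ l : ℝ, 0 < l →
      ∀ s t : ℝ, 0 ≤ s → s < t →
      l ^ (2 * δ) *
        (∫ u in Set.Ioo s t, ∫ v in Set.Ioo s t,
          Real.exp (-l * (2*t - u - v)) * (H * (2*H - 1) * |u - v| ^ (2*H - 2)))
        ≤ C * (t - s) ^ (2 * (H - δ)) := by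
  obtain ⟨hH1, hH2⟩ := hH
  have hH0 : (0:ℝ) < H := by linarith
  have hq0 : (0:ℝ) < 2*H - 1 := by linarith
  have hq1 : (-1:ℝ) < 2*H - 1 := by linarith
  have hp : (-1:ℝ) < 2*H - 2 := by linarith
  have hα : (0:ℝ) < H * (2*H - 1) := mul_pos hH0 hq0
  have hg1 : 0 < Real.Gamma (2*H - 1) := Real.Gamma_pos_of_pos hq0
  have hg2 : 0 < Real.Gamma (2*H) := Real.Gamma_pos_of_pos (by linarith)
  set C1 : ℝ := H * (2*H - 1) * ((1/2) * Real.Gamma (2*H - 1)) + H * Real.Gamma (2*H) with hC1def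
  have hC1 : 0 < C1 := by
    have := mul_pos hα (mul_pos (by norm_num : (0:ℝ) < 1/2) hg1)
    have := mul_pos hH0 hg2
    rw [hC1def]; linarith
  refine ⟨max 1 C1, lt_max_iff.mpr (Or.inl one_pos), ?_⟩
  intro δ hδ l hl s t hs0 hst
  have hts : (0:ℝ) < t - s := by linarith
  set I : ℝ := ∫ u in Set.Ioo s t, ∫ v in Set.Ioo s t,
      Real.exp (-l * (2*t - u - v)) * (H * (2*H - 1) * |u - v| ^ (2*H - 2)) with hIdef
  have hfnn : ∀ u v : ℝ,
      0 ≤ Real.exp (-l * (2*t - u - v)) * (H * (2*H - 1) * |u - v| ^ (2*H - 2)) :=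
    fun u v => mul_nonneg (Real.exp_pos _).le
      (mul_nonneg hα.le (Real.rpow_nonneg (abs_nonneg _) _))
  have hinn_nn : ∀ u : ℝ, 0 ≤ ∫ v in Set.Ioo s t,
      Real.exp (-l * (2*t - u - v)) * (H * (2*H - 1) * |u - v| ^ (2*H - 2)) :=
    fun u => integral_nonneg (fun v => hfnn u v)
  have hI0 : 0 ≤ I := integral_nonneg hinn_nn
  -- Step 1 : I ≤ (t-s)^(2H)
  have step1 : I ≤ (t - s) ^ (2*H) := by
    have hc1 : Continuous (fun u : ℝ => (u - s) ^ (2*H-1)) :=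
      (continuous_id.sub continuous_const).rpow_const (fun x => Or.inr hq0.le)
    have hc2 : Continuous (fun u : ℝ => (t - u) ^ (2*H-1)) :=
      (continuous_const.sub continuous_id).rpow_const (fun x => Or.inr hq0.le)
    have hbnd_cont : Continuous (fun u : ℝ => H * ((u - s) ^ (2*H-1) + (t - u) ^ (2*H-1))) :=
      continuous_const.mul (hc1.add hc2)
    have hbnd_int : IntegrableOn
        (fun u : ℝ => H * ((u - s) ^ (2*H-1) + (t - u) ^ (2*H-1))) (Set.Ioo s t) :=
      (hbnd_cont.integrableOn_Icc).mono_set Set.Ioo_subset_Icc_self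
    have houter : I ≤ ∫ u in Set.Ioo s t, H * ((u - s) ^ (2*H-1) + (t - u) ^ (2*H-1)) := by
      rw [hIdef]
      refine integral_mono_of_nonneg (ae_of_all _ hinn_nn) hbnd_int ?_
      refine (ae_restrict_iff' measurableSet_Ioo).mpr (ae_of_all _ fun u hu => ?_)
      have hsu : s ≤ u := hu.1.le
      have hut : u ≤ t := hu.2.le
      have hII : IntervalIntegrable (fun v => |u - v| ^ (2*H-2)) volume s t :=
        (abs_II_left hp hsu).trans (abs_II_right hp hut)
      have habs_int : IntegrableOn
          (fun v => H * (2*H-1) * |u - v| ^ (2*H-2)) (Set.Ioo s t) :=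
        (intervalIntegrable_iff_integrableOn_Ioo_of_le hst.le).mp
          (hII.const_mul (H * (2*H-1)))
      have hmono : (∫ v in Set.Ioo s t,
            Real.exp (-l * (2*t - u - v)) * (H * (2*H - 1) * |u - v| ^ (2*H - 2)))
          ≤ ∫ v in Set.Ioo s t, H * (2*H-1) * |u - v| ^ (2*H-2) := by
        refine integral_mono_of_nonneg (ae_of_all _ (hfnn u)) habs_int ?_
        refine (ae_restrict_iff' measurableSet_Ioo).mpr (ae_of_all _ fun v hv => ?_)
        have h1 : Real.exp (-l * (2*t - u - v)) ≤ 1 := by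
          rw [Real.exp_le_one_iff]
          nlinarith [hu.2, hv.2, hl.le]
        calc Real.exp (-l * (2*t - u - v)) * (H * (2*H - 1) * |u - v| ^ (2*H - 2))
            ≤ 1 * (H * (2*H - 1) * |u - v| ^ (2*H - 2)) :=
              mul_le_mul_of_nonneg_right h1
                (mul_nonneg hα.le (Real.rpow_nonneg (abs_nonneg _) _))
          _ = H * (2*H-1) * |u - v| ^ (2*H-2) := one_mul _
      have hval : (∫ v in Set.Ioo s t, H * (2*H-1) * |u - v| ^ (2*H-2))
          = H * ((u - s) ^ (2*H-1) + (t - u) ^ (2*H-1)) := by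
        rw [← integral_Ioc_eq_integral_Ioo, ← intervalIntegral.integral_of_le hst.le,
            intervalIntegral.integral_const_mul]
        have e1 : ∫ v in s..u, |u - v| ^ (2*H-2) = (u-s)^(2*H-2+1)/(2*H-2+1) := by
          rw [intervalIntegral.integral_congr (g := fun v => (u - v) ^ (2*H-2))
              (fun v hv => by
                rw [uIcc_of_le hsu] at hv
                simp only
                rw [abs_of_nonneg (by linarith [hv.2] : (0:ℝ) ≤ u - v)]),
            val_left hp]
        have e2 : ∫ v in u..t, |u - v| ^ (2*H-2) = (t-u)^(2*H-2+1)/(2*H-2+1) := by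
          rw [intervalIntegral.integral_congr (g := fun v => (v - u) ^ (2*H-2))
              (fun v hv => by
                rw [uIcc_of_le hut] at hv
                simp only
                rw [abs_sub_comm, abs_of_nonneg (by linarith [hv.1] : (0:ℝ) ≤ v - u)]),
            val_right hp]
        rw [← intervalIntegral.integral_add_adjacent_intervals
              (abs_II_left hp hsu) (abs_II_right hp hut), e1, e2]
        rw [show 2*H-2+1 = 2*H-1 by ring]
        field_simp [show H*2-1 ≠ 0 by linarith]
      exact le_trans hmono (le_of_eq hval)
    have houtval : (∫ u in Set.Ioo s t, H * ((u - s) ^ (2*H-1) + (t - u) ^ (2*H-1)))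
        = (t-s)^(2*H) := by
      rw [← integral_Ioc_eq_integral_Ioo, ← intervalIntegral.integral_of_le hst.le,
          intervalIntegral.integral_const_mul,
          intervalIntegral.integral_add (II_right hq1 s t) (II_left hq1 s t),
          val_right hq1, val_left hq1]
      rw [show 2*H-1+1 = 2*H by ring]
      field_simp
      ring
    exact le_trans houter (le_of_eq houtval)
  -- Step 2 : l^(2H) * I ≤ C1
  have step2 : l ^ (2*H) * I ≤ C1 := by
    have hc2 : Continuous (fun u : ℝ => (t - u) ^ (2*H-1)) :=
      (continuous_const.sub continuous_id).rpow_const (fun x => Or.inr hq0.le)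
    have hcexp1 : Continuous (fun u : ℝ => Real.exp (-(2*l*(t-u)))) := by fun_prop
    have hcexp2 : Continuous (fun u : ℝ => Real.exp (-(l*(t-u)))) := by fun_prop
    have hG_int : IntegrableOn (fun u : ℝ =>
        H*(2*H-1) * ((1/l)^(2*H-1) * Real.Gamma (2*H-1)) * Real.exp (-(2*l*(t-u)))
        + H * ((t-u)^(2*H-1) * Real.exp (-(l*(t-u))))) (Set.Ioo s t) :=
      ((((continuous_const.mul hcexp1).add
        (continuous_const.mul (hc2.mul hcexp2)))).integrableOn_Icc).mono_set
        Set.Ioo_subset_Icc_self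
    have hIG : I ≤ ∫ u in Set.Ioo s t,
        (H*(2*H-1) * ((1/l)^(2*H-1) * Real.Gamma (2*H-1)) * Real.exp (-(2*l*(t-u)))
        + H * ((t-u)^(2*H-1) * Real.exp (-(l*(t-u))))) := by
      rw [hIdef]
      refine integral_mono_of_nonneg (ae_of_all _ hinn_nn) hG_int ?_
      refine (ae_restrict_iff' measurableSet_Ioo).mpr (ae_of_all _ fun u hu => ?_)
      beta_reduce
      have hsu : s ≤ u := hu.1.le
      have hut : u ≤ t := hu.2.le
      have hA_II : IntervalIntegrable (fun v =>
          Real.exp (-l * (2*t - u - v)) * (H * (2*H - 1) * |u - v| ^ (2*H - 2))) volume s u :=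
        IntervalIntegrable.continuousOn_mul ((abs_II_left hp hsu).const_mul (H*(2*H-1)))
          (Continuous.continuousOn (by fun_prop))
      have hB_II : IntervalIntegrable (fun v =>
          Real.exp (-l * (2*t - u - v)) * (H * (2*H - 1) * |u - v| ^ (2*H - 2))) volume u t :=
        IntervalIntegrable.continuousOn_mul ((abs_II_right hp hut).const_mul (H*(2*H-1)))
          (Continuous.continuousOn (by fun_prop))
      rw [← integral_Ioc_eq_integral_Ioo, ← intervalIntegral.integral_of_le hst.le,
          ← intervalIntegral.integral_add_adjacent_intervals hA_II hB_II]
      have hA : (∫ v in s..u,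
            Real.exp (-l * (2*t - u - v)) * (H * (2*H - 1) * |u - v| ^ (2*H - 2)))
          ≤ H*(2*H-1) * ((1/l)^(2*H-1) * Real.Gamma (2*H-1)) * Real.exp (-(2*l*(t-u))) := by
        have hEq : Set.EqOn
            (fun v => Real.exp (-l * (2*t - u - v)) * (H * (2*H - 1) * |u - v| ^ (2*H - 2)))
            (fun v => (H*(2*H-1) * Real.exp (-(2*l*(t-u))))
              * ((u-v)^(2*H-2) * Real.exp (-(l*(u-v))))) (Set.uIcc s u) := by
          intro v hv
          rw [uIcc_of_le hsu] at hv
          simp only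
          rw [abs_of_nonneg (by linarith [hv.2] : (0:ℝ) ≤ u - v),
              show -l * (2*t - u - v) = -(2*l*(t-u)) + -(l*(u-v)) by ring, Real.exp_add]
          ring
        rw [intervalIntegral.integral_congr hEq, intervalIntegral.integral_const_mul]
        have hsub := intervalIntegral.integral_comp_sub_left (a := s) (b := u)
            (fun w => w^(2*H-2) * Real.exp (-(l*w))) u
        simp only [sub_self] at hsub
        rw [hsub]
        have hbd := int_le_gamma hp hl (by linarith [hu.1] : (0:ℝ) ≤ u - s)
        rw [show 2*H-2+1 = 2*H-1 by ring] at hbd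
        calc (H*(2*H-1) * Real.exp (-(2*l*(t-u))))
              * (∫ w in (0:ℝ)..(u-s), w^(2*H-2) * Real.exp (-(l*w)))
            ≤ (H*(2*H-1) * Real.exp (-(2*l*(t-u))))
              * ((1/l)^(2*H-1) * Real.Gamma (2*H-1)) :=
              mul_le_mul_of_nonneg_left hbd (mul_nonneg hα.le (Real.exp_pos _).le)
          _ = H*(2*H-1) * ((1/l)^(2*H-1) * Real.Gamma (2*H-1)) * Real.exp (-(2*l*(t-u))) := by
              ring
      have hB : (∫ v in u..t,
            Real.exp (-l * (2*t - u - v)) * (H * (2*H - 1) * |u - v| ^ (2*H - 2)))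
          ≤ H * ((t-u)^(2*H-1) * Real.exp (-(l*(t-u)))) := by
        have hg_II : IntervalIntegrable (fun v =>
            Real.exp (-(l*(t-u))) * (H*(2*H-1) * (v-u)^(2*H-2))) volume u t :=
          ((II_right hp u t).const_mul (H*(2*H-1))).const_mul (Real.exp (-(l*(t-u))))
        have hmono := intervalIntegral.integral_mono_on hut hB_II hg_II (fun v hv => by
          rw [abs_sub_comm, abs_of_nonneg (by linarith [hv.1] : (0:ℝ) ≤ v - u)]
          refine mul_le_mul_of_nonneg_right (Real.exp_le_exp.mpr (by nlinarith [hv.2, hl.le]))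
            (mul_nonneg hα.le (Real.rpow_nonneg (by linarith [hv.1] : (0:ℝ) ≤ v - u) _)))
        refine hmono.trans (le_of_eq ?_)
        rw [intervalIntegral.integral_const_mul, intervalIntegral.integral_const_mul,
            val_right hp, show 2*H-2+1 = 2*H-1 by ring]
        field_simp [show H*2-1 ≠ 0 by linarith]
      exact add_le_add hA hB
    have hGval : (∫ u in Set.Ioo s t,
        (H*(2*H-1) * ((1/l)^(2*H-1) * Real.Gamma (2*H-1)) * Real.exp (-(2*l*(t-u)))
        + H * ((t-u)^(2*H-1) * Real.exp (-(l*(t-u))))))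
        ≤ H*(2*H-1) * ((1/l)^(2*H-1) * Real.Gamma (2*H-1)) * (1/(2*l))
          + H * ((1/l)^(2*H) * Real.Gamma (2*H)) := by
      rw [← integral_Ioc_eq_integral_Ioo, ← intervalIntegral.integral_of_le hst.le,
          intervalIntegral.integral_add
            (f := fun u => H*(2*H-1) * ((1/l)^(2*H-1) * Real.Gamma (2*H-1)) * Real.exp (-(2*l*(t-u))))
            (g := fun u => H * ((t-u)^(2*H-1) * Real.exp (-(l*(t-u)))))
            ((continuous_const.mul hcexp1).intervalIntegrable s t)
            ((continuous_const.mul (hc2.mul hcexp2)).intervalIntegrable s t),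
          intervalIntegral.integral_const_mul, intervalIntegral.integral_const_mul]
      refine add_le_add (mul_le_mul_of_nonneg_left ?_ ?_)
        (mul_le_mul_of_nonneg_left ?_ hH0.le)
      · have hsub := intervalIntegral.integral_comp_sub_left (a := s) (b := t)
            (fun w => Real.exp (-(2*l*w))) t
        simp only [sub_self] at hsub
        rw [hsub]
        have hbd := int_le_gamma (p := 0) (by norm_num) (by positivity : (0:ℝ) < 2*l) hts.le
        simp only [Real.rpow_zero, one_mul, zero_add, Real.rpow_one, Real.Gamma_one,
          mul_one] at hbd
        exact hbd
      · exact mul_nonneg hα.le (mul_nonneg (Real.rpow_nonneg (by positivity) _) hg1.le)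
      · have hsub := intervalIntegral.integral_comp_sub_left (a := s) (b := t)
            (fun w => w^(2*H-1) * Real.exp (-(l*w))) t
        simp only [sub_self] at hsub
        rw [hsub]
        have hbd := int_le_gamma hq1 hl hts.le
        rw [show 2*H-1+1 = 2*H by ring] at hbd
        exact hbd
    have hfinal : l^(2*H) * (H*(2*H-1) * ((1/l)^(2*H-1) * Real.Gamma (2*H-1)) * (1/(2*l))
          + H * ((1/l)^(2*H) * Real.Gamma (2*H))) = C1 := by
      have hL : (0:ℝ) < l ^ (2*H-1) := Real.rpow_pos_of_pos hl _
      have hL2 : (0:ℝ) < l ^ (2*H) := Real.rpow_pos_of_pos hl _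
      have hLl : l^(2*H) = l^(2*H-1) * l := by
        rw [← Real.rpow_add_one hl.ne' (2*H-1)]
        congr 1
        ring
      have hinv1 : (1/l : ℝ)^(2*H-1) = (l^(2*H-1))⁻¹ := by
        rw [one_div, Real.inv_rpow hl.le]
      have hinv2 : (1/l : ℝ)^(2*H) = (l^(2*H))⁻¹ := by
        rw [one_div, Real.inv_rpow hl.le]
      rw [hC1def, hinv1, hinv2, hLl]
      field_simp
    calc l ^ (2*H) * I
        ≤ l ^ (2*H) * (H*(2*H-1) * ((1/l)^(2*H-1) * Real.Gamma (2*H-1)) * (1/(2*l))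
          + H * ((1/l)^(2*H) * Real.Gamma (2*H))) :=
          mul_le_mul_of_nonneg_left (hIG.trans hGval) (Real.rpow_nonneg hl.le _)
      _ = C1 := hfinal
  -- Step 3 : interpolation
  rcases eq_or_lt_of_le hI0 with h0 | hIpos
  · rw [← h0, mul_zero]
    have hmax : (0:ℝ) < max 1 C1 := lt_max_iff.mpr (Or.inl one_pos)
    positivity
  · obtain ⟨hδ0, hδH⟩ := hδ
    have hθ0 : 0 ≤ δ / H := div_nonneg hδ0 hH0.le
    have hθ1 : δ / H ≤ 1 := (div_le_one hH0).mpr hδH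
    have key : l ^ (2*δ) * I = (l ^ (2*H) * I) ^ (δ/H) * I ^ (1 - δ/H) := by
      have e1 : δ/H + (1 - δ/H) = 1 := by ring
      have e2 : 2*H*(δ/H) = 2*δ := by field_simp
      rw [Real.mul_rpow (Real.rpow_nonneg hl.le _) hI0, mul_assoc, ← Real.rpow_add hIpos,
          e1, Real.rpow_one, ← Real.rpow_mul hl.le, e2]
    calc l ^ (2*δ) * I = (l ^ (2*H) * I) ^ (δ/H) * I ^ (1 - δ/H) := key
      _ ≤ C1 ^ (δ/H) * ((t-s)^(2*H)) ^ (1 - δ/H) :=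
          mul_le_mul
            (Real.rpow_le_rpow (mul_nonneg (Real.rpow_nonneg hl.le _) hI0) step2 hθ0)
            (Real.rpow_le_rpow hI0 step1 (by linarith))
            (Real.rpow_nonneg hI0 _) (Real.rpow_nonneg hC1.le _)
      _ ≤ (max 1 C1) * (t-s) ^ (2*(H-δ)) := by
          have h2 : ((t-s)^(2*H)) ^ (1 - δ/H) = (t-s) ^ (2*(H-δ)) := by
            rw [← Real.rpow_mul hts.le]
            congr 1
            field_simp
          have h1 : C1 ^ (δ/H) ≤ max 1 C1 := by
            calc C1 ^ (δ/H) ≤ (max 1 C1) ^ (δ/H) :=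
                  Real.rpow_le_rpow hC1.le (le_max_right _ _) hθ0
              _ ≤ (max 1 C1) ^ (1:ℝ) :=
                  Real.rpow_le_rpow_of_exponent_le (le_max_left _ _) hθ1
              _ = max 1 C1 := Real.rpow_one _
          rw [h2]
          exact mul_le_mul_of_nonneg_right h1 (Real.rpow_nonneg hts.le _)
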